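/- For positive integers l ≤ n with n ≥ 2, the sum over all l-compositions p of n of 1/(L(p)·R(p)) equals (1/n²) · e_{l−1}( 1/q_1, 1/q_2, …, 1/q_{n−1} ), where q_i = i(n−i) and e_{l−1} is the (l−1)-st elementary symmetric polynomial evaluated at the n−1 listed rational numbers. -/

import Mathlib

open Finset MvPolynomial

/-- Product of left partial sums of a list of parts (as a rational number). -/
noncomputable def Lval (p : List ℕ) : ℚ :=
  ∏ j ∈ Finset.range p.length, (((p.take (j + 1)).sum : ℕ) : ℚ)

/-- Product of right partial sums. -/
noncomputable def Rval (p : List ℕ) : ℚ := Lval p.reverse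

/-- `S k l n`: the sum over all `l`-compositions `p` of `n` of `e_k(p)/(L(p)R(p))`. -/
noncomputable def Sval (k l n : ℕ) : ℚ :=
  ∑ c ∈ Finset.univ.filter (fun c : Composition n => c.length = l),
    ((c.blocks.map (fun i : ℕ => (i : ℚ)) : Multiset ℚ).esymm k) /
      (Lval c.blocks * Rval c.blocks)

/-- The generating polynomial `P_n(u,v)` in `ℚ[u,v]`, with `X 0 = u`, `X 1 = v`. -/
noncomputable def Pgen (n : ℕ) : MvPolynomial (Fin 2) ℚ :=
  ∑ l ∈ Finset.Icc 1 n, ∑ k ∈ Finset.range (l + 1),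
    C (Sval k l n) * X 0 ^ k * X 1 ^ (l - k)

/- ### Auxiliary lemmas -/

lemma sizeUpTo_monotone {n : ℕ} (c : Composition n) : Monotone c.sizeUpTo := by
  apply monotone_nat_of_le_succ
  intro j
  simp only [Composition.sizeUpTo, List.take_succ, List.sum_append]
  exact Nat.le_add_right _ _

lemma sizeUpTo_lt_of_lt {n : ℕ} (c : Composition n) {a b : ℕ} (hab : a < b)
    (hb : b ≤ c.length) : c.sizeUpTo a < c.sizeUpTo b := by
  have h2 : b - 1 < c.length := by omega
  have h3 := c.sizeUpTo_strict_mono h2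
  have hb1 : b - 1 + 1 = b := by omega
  rw [hb1] at h3
  exact lt_of_le_of_lt (sizeUpTo_monotone c (by omega : a ≤ b - 1)) h3

lemma injOn_sizeUpTo {n l : ℕ} (c : Composition n) (hc : c.length = l) :
    Set.InjOn (fun j => c.sizeUpTo (j + 1)) (Finset.range (l - 1)) := by
  intro a ha b hb hab
  simp only [Finset.coe_range, Set.mem_Iio] at ha hb
  by_contra hne
  rcases lt_or_gt_of_ne hne with h | h
  · exact absurd hab (ne_of_lt (sizeUpTo_lt_of_lt c (by omega) (by omega)))
  · exact absurd hab.symm (ne_of_lt (sizeUpTo_lt_of_lt c (by omega) (by omega)))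

lemma sizeUpTo_mem_Icc {n l : ℕ} (c : Composition n) (hc : c.length = l) (hl : 1 ≤ l)
    {j : ℕ} (hj : j < l - 1) : c.sizeUpTo (j + 1) ∈ Finset.Icc 1 (n - 1) := by
  have h1 : c.sizeUpTo 0 < c.sizeUpTo (j + 1) :=
    sizeUpTo_lt_of_lt c (by omega) (by omega)
  have h2 : c.sizeUpTo (j + 1) < c.sizeUpTo l :=
    sizeUpTo_lt_of_lt c (by omega) (by omega)
  have h3 : c.sizeUpTo l = n := by rw [← hc]; exact c.sizeUpTo_length
  have h0 : c.sizeUpTo 0 = 0 := c.sizeUpTo_zero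
  rw [Finset.mem_Icc]
  omega

lemma Lval_eq {n : ℕ} (c : Composition n) :
    Lval c.blocks = ∏ j ∈ Finset.range c.length, ((c.sizeUpTo (j + 1) : ℕ) : ℚ) := by
  rw [Lval, c.blocks_length]
  rfl

lemma Rval_eq {n : ℕ} (c : Composition n) :
    Rval c.blocks = ∏ j ∈ Finset.range c.length, (((n - c.sizeUpTo j : ℕ)) : ℚ) := by
  rw [Rval, Lval, List.length_reverse, c.blocks_length]
  rw [← Finset.prod_range_reflect (fun j => (((n - c.sizeUpTo j : ℕ)) : ℚ)) c.length]
  apply Finset.prod_congr rfl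
  intro j hj
  rw [Finset.mem_range] at hj
  congr 1
  rw [List.take_reverse, List.sum_reverse]
  have hsplit : (c.blocks.take (c.blocks.length - (j + 1))).sum
      + (c.blocks.drop (c.blocks.length - (j + 1))).sum = n := by
    rw [← List.sum_append, List.take_append_drop, c.blocks_sum]
  have hk : c.blocks.length - (j + 1) = c.length - 1 - j := by
    rw [c.blocks_length]; omega
  have hle : c.sizeUpTo (c.length - 1 - j) ≤ n := c.sizeUpTo_le _
  have : c.sizeUpTo (c.length - 1 - j) = (c.blocks.take (c.blocks.length - (j + 1))).sum := by
    rw [hk]; rfl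
  omega

lemma inv_LR {n l : ℕ} (c : Composition n) (hc : c.length = l) (hl : 1 ≤ l) :
    1 / (Lval c.blocks * Rval c.blocks) =
      1 / (n : ℚ) ^ 2 * ∏ j ∈ Finset.range (l - 1),
        (1 / ((c.sizeUpTo (j + 1) : ℚ) * ((n : ℚ) - (c.sizeUpTo (j + 1) : ℚ)))) := by
  obtain ⟨m, hm⟩ : ∃ m, l = m + 1 := ⟨l - 1, by omega⟩
  subst hm
  have hL : Lval c.blocks =
      (∏ j ∈ Finset.range m, ((c.sizeUpTo (j + 1) : ℕ) : ℚ)) * (n : ℚ) := by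
    rw [Lval_eq, hc, Finset.prod_range_succ]
    have h : c.sizeUpTo (m + 1) = n := by rw [← hc]; exact c.sizeUpTo_length
    rw [h]
  have hR : Rval c.blocks =
      (∏ j ∈ Finset.range m, (((n - c.sizeUpTo (j + 1) : ℕ)) : ℚ)) * (n : ℚ) := by
    rw [Rval_eq, hc, Finset.prod_range_succ']
    congr 1
  have hcast : ∀ j, (((n - c.sizeUpTo (j + 1) : ℕ)) : ℚ)
      = (n : ℚ) - (c.sizeUpTo (j + 1) : ℚ) := fun j => by
    rw [Nat.cast_sub (c.sizeUpTo_le _)]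
  rw [hL, hR]
  simp only [hcast, one_div, mul_inv, Finset.prod_mul_distrib, Finset.prod_inv_distrib,
    Nat.add_sub_cancel]
  ring

/-- `∑ 1/(L(p)R(p)) = (1/n²) · e_{l-1}(1/q₁, …, 1/q_{n-1})`, the sum over all
`l`-compositions of `n`, where `q_i = i(n-i)`. -/
theorem composition_sum_reciprocal (n : ℕ) (hn : 2 ≤ n) (l : ℕ) (hl : 1 ≤ l) (hln : l ≤ n)
    (q : ℕ → ℚ) (hq : ∀ i, q i = (i : ℚ) * ((n : ℚ) - i)) :
    (∑ c ∈ Finset.univ.filter (fun c : Composition n => c.length = l),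
        1 / (Lval c.blocks * Rval c.blocks)) =
      (1 / (n : ℚ) ^ 2) *
        ((Finset.Icc 1 (n - 1)).val.map (fun i : ℕ => 1 / q i)).esymm (l - 1) := by
  classical
  rw [Finset.esymm_map_val, Finset.mul_sum]
  refine Finset.sum_bij
    (fun c _ => (Finset.range (l - 1)).image (fun j => c.sizeUpTo (j + 1)))
    ?_ ?_ ?_ ?_
  · -- maps into powersetCard
    intro c hc
    have hcl : c.length = l := by simpa using (Finset.mem_filter.1 hc).2
    rw [Finset.mem_powersetCard]
    constructor
    · intro x hx
      rcases Finset.mem_image.1 hx with ⟨j, hj, rfl⟩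
      exact sizeUpTo_mem_Icc c hcl hl (Finset.mem_range.1 hj)
    · rw [Finset.card_image_of_injOn (injOn_sizeUpTo c hcl), Finset.card_range]
  · -- injective
    intro c1 hc1 c2 hc2 himg
    have hcl1 : c1.length = l := by simpa using (Finset.mem_filter.1 hc1).2
    have hcl2 : c2.length = l := by simpa using (Finset.mem_filter.1 hc2).2
    have himg' : (Finset.range (l - 1)).image (fun j => c1.sizeUpTo (j + 1))
        = (Finset.range (l - 1)).image (fun j => c2.sizeUpTo (j + 1)) := himg
    set t : Finset ℕ := (Finset.range (l - 1)).image (fun j => c1.sizeUpTo (j + 1)) with ht_def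
    have ht : t.card = l - 1 := by
      rw [ht_def, Finset.card_image_of_injOn (injOn_sizeUpTo c1 hcl1), Finset.card_range]
    have hsm1 : StrictMono (fun x : Fin (l - 1) => c1.sizeUpTo (x.1 + 1)) := by
      intro a b hab
      exact sizeUpTo_lt_of_lt c1 (by omega) (by have := b.2; omega)
    have hsm2 : StrictMono (fun x : Fin (l - 1) => c2.sizeUpTo (x.1 + 1)) := by
      intro a b hab
      exact sizeUpTo_lt_of_lt c2 (by omega) (by have := b.2; omega)
    have hmem1 : ∀ x : Fin (l - 1), c1.sizeUpTo (x.1 + 1) ∈ t := fun x =>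
      Finset.mem_image.2 ⟨x.1, Finset.mem_range.2 x.2, rfl⟩
    have hmem2 : ∀ x : Fin (l - 1), c2.sizeUpTo (x.1 + 1) ∈ t := fun x => by
      rw [himg']
      exact Finset.mem_image.2 ⟨x.1, Finset.mem_range.2 x.2, rfl⟩
    have h1 := Finset.orderEmbOfFin_unique ht hmem1 hsm1
    have h2 := Finset.orderEmbOfFin_unique ht hmem2 hsm2
    have hf : ∀ x : Fin (l - 1), c1.sizeUpTo (x.1 + 1) = c2.sizeUpTo (x.1 + 1) := by
      intro x
      exact (congrFun h1 x).trans (congrFun h2 x).symm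
    have hs : ∀ j, j ≤ l → c1.sizeUpTo j = c2.sizeUpTo j := by
      intro j hj
      rcases Nat.eq_zero_or_pos j with h0 | hpos
      · subst h0; rw [c1.sizeUpTo_zero, c2.sizeUpTo_zero]
      rcases eq_or_lt_of_le hj with hje | hjlt
      · subst hje
        have g1 : c1.sizeUpTo c1.length = n := c1.sizeUpTo_length
        have g2 : c2.sizeUpTo c2.length = n := c2.sizeUpTo_length
        rw [hcl1] at g1
        rw [hcl2] at g2
        rw [g1, g2]
      · have := hf ⟨j - 1, by omega⟩
        simpa [Nat.sub_add_cancel hpos] using this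
    apply Composition.ext
    apply List.ext_getElem
    · rw [c1.blocks_length, c2.blocks_length, hcl1, hcl2]
    intro i h1i h2i
    have hi : i < l := by rwa [c1.blocks_length, hcl1] at h1i
    have e1 := c1.sizeUpTo_succ (by omega : i < c1.length)
    have e2 := c2.sizeUpTo_succ (by omega : i < c2.length)
    have q1 := hs i (by omega)
    have q2 := hs (i + 1) (by omega)
    omega
  · -- surjective
    intro t ht
    rcases Finset.mem_powersetCard.1 ht with ⟨hsub, htc⟩
    set e : ℕ → ℕ := fun j =>
      if h : 1 ≤ j ∧ j ≤ l - 1 then (t.orderEmbOfFin htc) ⟨j - 1, by omega⟩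
      else if j = 0 then 0 else n with he_def
    have he_eq : ∀ j (h1 : 1 ≤ j) (h2 : j ≤ l - 1),
        e j = (t.orderEmbOfFin htc) ⟨j - 1, by omega⟩ := by
      intro j h1 h2
      rw [he_def]
      simp only [h1, h2, and_self, dif_pos]
    have he_mem : ∀ j, 1 ≤ j → j ≤ l - 1 → e j ∈ t := by
      intro j h1 h2
      rw [he_eq j h1 h2]
      exact Finset.orderEmbOfFin_mem t htc _
    have he_Icc : ∀ j, 1 ≤ j → j ≤ l - 1 → 1 ≤ e j ∧ e j ≤ n - 1 := by
      intro j h1 h2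
      have := hsub (he_mem j h1 h2)
      exact Finset.mem_Icc.1 this
    have he0 : e 0 = 0 := by rw [he_def]; norm_num
    have he_top : ∀ j, l ≤ j → e j = n := by
      intro j hj
      rw [he_def]
      have h1 : ¬(1 ≤ j ∧ j ≤ l - 1) := by omega
      have h2 : j ≠ 0 := by omega
      simp [h1, h2]
    have hstep : ∀ j, j < l → e j < e (j + 1) := by
      intro j hj
      rcases Nat.eq_zero_or_pos j with h0 | hpos
      · subst h0
        show e 0 < e 1
        rw [he0]
        rcases Nat.lt_or_ge 1 l with h | h
        · have := he_Icc 1 le_rfl (by omega)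
          omega
        · have : l = 1 := by omega
          rw [he_top 1 (by omega)]
          omega
      rcases Nat.lt_or_ge (j + 1) l with h | h
      · -- both interior
        rw [he_eq j hpos (by omega), he_eq (j + 1) (by omega) (by omega)]
        apply (t.orderEmbOfFin htc).strictMono
        simp only [Fin.mk_lt_mk]
        omega
      · -- j + 1 = l
        have hjl : j ≤ l - 1 := by omega
        have := he_Icc j hpos hjl
        rw [he_top (j + 1) (by omega)]
        omega
    have hemono : Monotone e := by
      apply monotone_nat_of_le_succ
      intro j
      rcases Nat.lt_or_ge j l with h | h
      · exact le_of_lt (hstep j h)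
      · rw [he_top j h, he_top (j + 1) (by omega)]
    have hpos : ∀ {i : ℕ}, i ∈ List.ofFn (fun j : Fin l => e (j.1 + 1) - e j.1) → 0 < i := by
      intro i hi
      simp only [List.mem_ofFn, Set.mem_range] at hi
      rcases hi with ⟨j, rfl⟩
      have := hstep j.1 j.2
      omega
    have hsum : (List.ofFn (fun j : Fin l => e (j.1 + 1) - e j.1)).sum = n := by
      rw [List.sum_ofFn]
      rw [Fin.sum_univ_eq_sum_range (fun i => e (i + 1) - e i) l]
      rw [Finset.sum_range_tsub hemono, he0, he_top l le_rfl]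
      omega
    set c₀ : Composition n := ⟨List.ofFn (fun j : Fin l => e (j.1 + 1) - e j.1), hpos, hsum⟩
      with hc₀_def
    have hlen : c₀.length = l := by
      rw [← c₀.blocks_length, hc₀_def]
      simp
    have hsz : ∀ j, j ≤ l → c₀.sizeUpTo j = e j := by
      intro j
      induction j with
      | zero => intro _; rw [c₀.sizeUpTo_zero, he0]
      | succ j ih =>
        intro hj
        have hjl : j < l := by omega
        rw [c₀.sizeUpTo_succ (by omega : j < c₀.length), ih (by omega)]
        have hblk : c₀.blocks[j]'(by rw [c₀.blocks_length]; omega) = e (j + 1) - e j :=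
          List.getElem_ofFn (f := fun i : Fin l => e (i.1 + 1) - e i.1) (i := j) (by simp; omega)
        rw [hblk]
        have := hstep j hjl
        omega
    refine ⟨c₀, Finset.mem_filter.2 ⟨Finset.mem_univ _, hlen⟩, ?_⟩
    show (Finset.range (l - 1)).image (fun j => c₀.sizeUpTo (j + 1)) = t
    have hsubset : (Finset.range (l - 1)).image (fun j => c₀.sizeUpTo (j + 1)) ⊆ t := by
      intro x hx
      rcases Finset.mem_image.1 hx with ⟨j, hj, rfl⟩
      rw [Finset.mem_range] at hj
      rw [hsz (j + 1) (by omega)]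
      exact he_mem (j + 1) (by omega) (by omega)
    apply Finset.eq_of_subset_of_card_le hsubset
    rw [Finset.card_image_of_injOn (injOn_sizeUpTo c₀ hlen), Finset.card_range, htc]
  · -- values agree
    intro c hc
    have hcl : c.length = l := by simpa using (Finset.mem_filter.1 hc).2
    show 1 / (Lval c.blocks * Rval c.blocks) = 1 / (n : ℚ) ^ 2 *
      ∏ i ∈ (Finset.range (l - 1)).image (fun j => c.sizeUpTo (j + 1)), 1 / q i
    rw [Finset.prod_image (fun x hx y hy hxy => injOn_sizeUpTo c hcl
      (by simpa using hx) (by simpa using hy) hxy)]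
    rw [inv_LR c hcl hl]
    congr 1
    apply Finset.prod_congr rfl
    intro j hj
    rw [hq]
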